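/- Let 1 ≤ k ≤ n. The map δ_{m+k} : dk_{m,n} → dk_{m,n+1} sends the ideal [c,c] into the corresponding ideal of dk_{m,n+1} and hence induces a Lie algebra homomorphism δ_{m+k} : edk_{m,n} → edk_{m,n+1}. For u ∈ lie_m: δ_{m+k}(u_i) = u_i if i < k; δ_{m+k}(u_k) = u_k + u_{k+1} + (R(u))_{k(k+1)}, where R denotes the restriction of μ_gr (with N = m) to lie_m; and δ_{m+k}(u_i) = u_{i+1} if i > k. For w ∈ ass_m and 1 ≤ i < j ≤ n: δ_{m+k}(w_{ij}) = w_{ij} if j < k; w_{ik} + w_{i(k+1)} if j = k; w_{i(j+1)} if i < k < j; w_{k(j+1)} + w_{(k+1)(j+1)} if i = k; and w_{(i+1)(j+1)} if k < i. -/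

import Mathlib

noncomputable section

open scoped TensorProduct

attribute [local instance] LieRing.ofAssociativeRing

/-- The free unital associative algebra over `ℚ` on `N` generators. -/
abbrev Ass (N : ℕ) : Type := FreeAlgebra ℚ (Fin N)

/-- The `i`-th generator `x_i`. -/
def gen {N : ℕ} (i : Fin N) : Ass N := FreeAlgebra.ι ℚ i

/-- The monomial (word) associated to a list of generator indices. -/
def wordProd {N : ℕ} (l : List (Fin N)) : Ass N := (l.map gen).prod

/-- Extend a function on words (monomials) to a `ℚ`-linear map on the free algebra,
using the monomial basis. -/
def liftWord {N : ℕ} {A : Type} [AddCommGroup A] [Module ℚ A]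
    (f : List (Fin N) → A) : Ass N →ₗ[ℚ] A :=
  (FreeAlgebra.basisFreeMonoid ℚ (Fin N)).constr ℚ fun w => f w.toList

/-- `μ_gr` on a word. -/
def muWord {N : ℕ} : List (Fin N) → Ass N
  | [] => 0
  | [_] => 0
  | a :: b :: t => (if a = b then -(wordProd (a :: t)) else 0) + gen a * muWord (b :: t)

/-- The linearized self-intersection operation `μ_gr`. -/
def muGr (N : ℕ) : Ass N →ₗ[ℚ] Ass N := liftWord muWord

/-- The antipode: the anti-automorphism `ι` with `ι(x_i) = -x_i`, as a linear map. -/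
def iotaMap (N : ℕ) : Ass N →ₗ[ℚ] Ass N :=
  liftWord fun l => ((-1 : ℚ) ^ l.length) • wordProd l.reverse

/-- The (right) partial derivative `∂_i`, characterized on `lie_N` by
`a = Σ_i (∂_i a) x_i`. -/
def partialD {N : ℕ} (i : Fin N) : Ass N →ₗ[ℚ] Ass N :=
  liftWord fun l =>
    match l.getLast? with
    | some a => if a = i then wordProd l.dropLast else 0
    | none => 0

/-- `η_gr` on a pair of words. -/
def etaWord {N : ℕ} (l r : List (Fin N)) : Ass N :=
  match l.getLast?, r with
  | some a, b :: t => if a = b then -(wordProd (l.dropLast ++ a :: t)) else 0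
  | _, _ => 0

/-- The linearized homotopy intersection form `η_gr`. -/
def etaGr (N : ℕ) : Ass N →ₗ[ℚ] Ass N →ₗ[ℚ] Ass N :=
  liftWord fun l => liftWord fun r => etaWord l r

/-- Degree-`k` homogeneous part of a free algebra (word-length grading). -/
def homogS (X : Type) (k : ℕ) : Submodule ℚ (FreeAlgebra ℚ X) :=
  Submodule.span ℚ {z | ∃ l : List X, l.length = k ∧ z = (l.map (FreeAlgebra.ι ℚ)).prod}

/-- The projection onto the degree-`k` homogeneous component. -/
def homogComp {N : ℕ} (k : ℕ) : Ass N →ₗ[ℚ] Ass N :=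
  liftWord fun l => if l.length = k then wordProd l else 0

/-- The free Lie algebra on `x_1, …, x_N`, as the Lie subalgebra of `Ass N`
(with the commutator bracket) generated by the generators. -/
def lieN (N : ℕ) : LieSubalgebra ℚ (Ass N) :=
  LieSubalgebra.lieSpan ℚ (Ass N) (Set.range (gen (N := N)))

/-- The generator `x_i` as an element of `lie_N`. -/
def genL (N : ℕ) (i : Fin N) : lieN N :=
  ⟨gen i, LieSubalgebra.subset_lieSpan ⟨i, rfl⟩⟩

/-- Substitution: the algebra endomorphism of `ass_2` with `x ↦ p`, `y ↦ q`. -/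
def sub2 (p q : Ass 2) : Ass 2 →ₐ[ℚ] Ass 2 := FreeAlgebra.lift ℚ ![p, q]

/-- `x`. -/
def xA : Ass 2 := gen 0
/-- `y`. -/
def yA : Ass 2 := gen 1

/-- Equation (E1): `φ(y,0) − φ(x+y,0) = 0`. -/
def E1 (φ : Ass 2) : Prop := sub2 yA 0 φ - sub2 (xA + yA) 0 φ = 0

/-- Equation (E2): `(∂_y φ) + (∂_y φ)(y,0) − (∂_y φ)(x+y,0) − R(φ) = 0`,
where `R` is the restriction of `μ_gr` to `lie_2`. -/
def E2 (φ : Ass 2) : Prop :=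
  partialD 1 φ + sub2 yA 0 (partialD 1 φ) - sub2 (xA + yA) 0 (partialD 1 φ) - muGr 2 φ = 0

/-- Equation (E3): `[x, φ(y,x)] + [y, φ(x,y)] = 0`. -/
def E3 (φ : Ass 2) : Prop := ⁅xA, sub2 yA xA φ⁆ + ⁅yA, φ⁆ = 0

/-- `ν^em(φ) = (φ(y,x), φ(x,y))`. -/
def nuEm (φ : Ass 2) : Fin 2 → Ass 2 := ![sub2 yA xA φ, φ]

/-- The space `grt_1^em` of solutions to the linearized emergent equations. -/
def grt1em : Set (Ass 2) := {φ | φ ∈ lieN 2 ∧ E1 φ ∧ E2 φ ∧ E3 φ}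

/-- The derivation `ρ(ũ)` on a word. -/
def rhoWord {N : ℕ} (u : Fin N → Ass N) : List (Fin N) → Ass N
  | [] => 0
  | a :: t => ⁅gen a, u a⁆ * wordProd t + gen a * rhoWord u t

/-- The tangential derivation `ρ(ũ)`, determined by `ρ(ũ)(x_i) = [x_i, u_i]`. -/
def rho {N : ℕ} (u : Fin N → Ass N) : Ass N →ₗ[ℚ] Ass N := liftWord (rhoWord u)

/-- The span of commutators in `ass_N`. -/
def trRel (N : ℕ) : Submodule ℚ (Ass N) :=
  Submodule.span ℚ {z | ∃ a b : Ass N, z = a * b - b * a}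

/-- The trace space `tr_N = ass_N/[ass_N, ass_N]`. -/
abbrev Tr (N : ℕ) : Type := Ass N ⧸ trRel N

/-- The projection `|·| : ass_N → tr_N`. -/
def trM (N : ℕ) : Ass N →ₗ[ℚ] Tr N := (trRel N).mkQ

/-- The divergence `div(ũ) = Σ_i |x_i (∂_i u_i)|`. -/
def divergence {N : ℕ} (u : Fin N → Ass N) : Tr N :=
  ∑ i, trM N (gen i * partialD i (u i))

/-- `ũ ∈ tder_N`: all components lie in `lie_N`. -/
def IsTDer {N : ℕ} (u : Fin N → Ass N) : Prop := ∀ i, u i ∈ lieN N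

/-- `ũ ∈ sder_N`. -/
def IsSDer {N : ℕ} (u : Fin N → Ass N) : Prop := IsTDer u ∧ rho u (∑ i, gen i) = 0

/-- `ũ ∈ krv_N`. -/
def IsKRV {N : ℕ} (u : Fin N → Ass N) : Prop :=
  IsSDer u ∧ ∃ f : Fin (N + 1) → Polynomial ℚ,
    divergence u =
      trM N (Polynomial.aeval (∑ i, gen i) (f 0)) +
        ∑ i : Fin N, trM N (Polynomial.aeval (gen i) (f i.succ))

/-- `ũ ∈ krv_N^0`. -/
def IsKRV0 {N : ℕ} (u : Fin N → Ass N) : Prop :=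
  IsSDer u ∧ ∃ cf : Fin N → ℚ, divergence u = ∑ i, cf i • trM N (gen i)

/-- The swap `u(x,y) ↦ u(y,x)`. -/
def swapA : Ass 2 →ₐ[ℚ] Ass 2 := sub2 yA xA

/-- `ũ ∈ krv_2^sym`. -/
def IsKRVsym (u : Fin 2 → Ass 2) : Prop := IsKRV u ∧ u 1 = swapA (u 0)


/-- The coproduct `Δ` on `ass_N`, with `Δ(x_i) = x_i ⊗ 1 + 1 ⊗ x_i`. -/
def comulA (N : ℕ) : Ass N →ₐ[ℚ] (Ass N ⊗[ℚ] Ass N) :=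
  FreeAlgebra.lift ℚ fun i => gen i ⊗ₜ[ℚ] (1 : Ass N) + (1 : Ass N) ⊗ₜ[ℚ] gen i

/-- `μ_{r,gr} = ((|·|∘mult) ⊗ id) ∘ (id ⊗ ((ι ⊗ id) ∘ Δ)) ∘ (id ⊗ μ_gr) ∘ Δ`. -/
def muR (N : ℕ) : Ass N →ₗ[ℚ] Tr N ⊗[ℚ] Ass N :=
  (TensorProduct.map ((trM N).comp (LinearMap.mul' ℚ (Ass N))) LinearMap.id).comp <|
    ((TensorProduct.assoc ℚ (Ass N) (Ass N) (Ass N)).symm.toLinearMap).comp <|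
      (TensorProduct.map LinearMap.id
          ((TensorProduct.map (iotaMap N) LinearMap.id).comp (comulA N).toLinearMap)).comp <|
        (TensorProduct.map LinearMap.id (muGr N)).comp (comulA N).toLinearMap

/-- `Alt(a ⊗ b) = a ⊗ b - b ⊗ a`. -/
def altMap (N : ℕ) : Tr N ⊗[ℚ] Tr N →ₗ[ℚ] Tr N ⊗[ℚ] Tr N :=
  LinearMap.id - (TensorProduct.comm ℚ (Tr N) (Tr N)).toLinearMap

/-- The linearized Turaev cobracket `δ_gr = Alt ∘ (id ⊗ |·|) ∘ μ_{r,gr}`. -/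
def Dgr (N : ℕ) : Ass N →ₗ[ℚ] Tr N ⊗[ℚ] Tr N :=
  (altMap N).comp ((TensorProduct.map LinearMap.id (trM N)).comp (muR N))

/-- Index type of the generators `t_{pq}` (`p ≠ q`) of the Drinfeld–Kohno Lie algebra. -/
def dkGenIdx (N : ℕ) : Type := {pq : Fin N × Fin N // pq.1 ≠ pq.2}

abbrev FLdk (N : ℕ) := FreeLieAlgebra ℚ (dkGenIdx N)

def tFree {N : ℕ} (p q : Fin N) (h : p ≠ q) : FLdk N := FreeLieAlgebra.of ℚ ⟨(p, q), h⟩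

/-- The defining relations of `dk_N`: symmetry, commutation and 4T. -/
def dkRels (N : ℕ) : Set (FLdk N) :=
  {z | ∃ (p q : Fin N) (h : p ≠ q), z = tFree p q h - tFree q p h.symm} ∪
  {z | ∃ (p q r s : Fin N) (hpq : p ≠ q) (hrs : r ≠ s),
      p ≠ r ∧ p ≠ s ∧ q ≠ r ∧ q ≠ s ∧ z = ⁅tFree p q hpq, tFree r s hrs⁆} ∪
  {z | ∃ (p q r : Fin N) (hpq : p ≠ q) (hqr : q ≠ r) (hpr : p ≠ r),
      z = ⁅tFree p q hpq + tFree q r hqr, tFree p r hpr⁆}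

def dkIdeal (N : ℕ) : LieIdeal ℚ (FLdk N) := LieSubmodule.lieSpan ℚ (FLdk N) (dkRels N)

/-- The Drinfeld–Kohno Lie algebra `dk_N`. -/
abbrev dk (N : ℕ) := FLdk N ⧸ dkIdeal N

/-- The generator `t_{pq}` of `dk_N`. -/
def tGen {N : ℕ} (p q : Fin N) (h : p ≠ q) : dk N :=
  LieSubmodule.Quotient.mk (N := dkIdeal N) (tFree p q h)

/-- Index type of the generators of the mixed Drinfeld–Kohno Lie algebra `dk_{m,n}`:
pairs of distinct indices in `Fin (m+n)`, not both poles (i.e., not both `< m`). -/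
def MIdx (m n : ℕ) : Type :=
  {pq : Fin (m + n) × Fin (m + n) // pq.1 ≠ pq.2 ∧ (m ≤ (pq.1 : ℕ) ∨ m ≤ (pq.2 : ℕ))}

abbrev FLmix (m n : ℕ) := FreeLieAlgebra ℚ (MIdx m n)

def tMix {m n : ℕ} (p q : Fin (m + n)) (h : p ≠ q)
    (hm : m ≤ (p : ℕ) ∨ m ≤ (q : ℕ)) : FLmix m n :=
  FreeLieAlgebra.of ℚ ⟨(p, q), h, hm⟩

/-- The defining relations of `dk_{m,n}`: exactly the symmetry, commutation and 4T relations
of `dk_{m+n}` involving only mixed pairs. -/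
def mixRels (m n : ℕ) : Set (FLmix m n) :=
  {z | ∃ (p q : Fin (m + n)) (h : p ≠ q) (hm : m ≤ (p : ℕ) ∨ m ≤ (q : ℕ)),
      z = tMix p q h hm - tMix q p h.symm hm.symm} ∪
  {z | ∃ (p q r s : Fin (m + n)) (hpq : p ≠ q) (hmpq : m ≤ (p : ℕ) ∨ m ≤ (q : ℕ))
      (hrs : r ≠ s) (hmrs : m ≤ (r : ℕ) ∨ m ≤ (s : ℕ)),
      p ≠ r ∧ p ≠ s ∧ q ≠ r ∧ q ≠ s ∧ z = ⁅tMix p q hpq hmpq, tMix r s hrs hmrs⁆} ∪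
  {z | ∃ (p q r : Fin (m + n)) (hpq : p ≠ q) (hmpq : m ≤ (p : ℕ) ∨ m ≤ (q : ℕ))
      (hqr : q ≠ r) (hmqr : m ≤ (q : ℕ) ∨ m ≤ (r : ℕ))
      (hpr : p ≠ r) (hmpr : m ≤ (p : ℕ) ∨ m ≤ (r : ℕ)),
      z = ⁅tMix p q hpq hmpq + tMix q r hqr hmqr, tMix p r hpr hmpr⁆}

def mixIdeal (m n : ℕ) : LieIdeal ℚ (FLmix m n) :=
  LieSubmodule.lieSpan ℚ (FLmix m n) (mixRels m n)

/-- The mixed Drinfeld–Kohno Lie algebra `dk_{m,n}`. -/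
abbrev dkmn (m n : ℕ) := FLmix m n ⧸ mixIdeal m n

lemma castAdd_ne_natAdd {m n : ℕ} (i : Fin m) (j : Fin n) :
    Fin.castAdd n i ≠ Fin.natAdd m j := by
  intro h
  have hv := congrArg Fin.val h
  simp only [Fin.coe_castAdd, Fin.coe_natAdd] at hv
  have := i.isLt
  omega

lemma natAdd_ne {m n : ℕ} {u v : Fin n} (h : u ≠ v) :
    Fin.natAdd m u ≠ Fin.natAdd m v := by
  intro hh
  exact h (by
    have hv := congrArg Fin.val hh
    simp only [Fin.coe_natAdd] at hv
    exact Fin.ext (by omega))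

lemma natAdd_le_left (m : ℕ) {n : ℕ} (j : Fin n) : m ≤ (Fin.natAdd m j : ℕ) := by
  simp only [Fin.coe_natAdd]; omega

/-- The generator `a_{ij}` of `dk_{m,n}` (0-indexed): `a_{ij} = t_{i(m+j)}`. -/
def aG {m n : ℕ} (i : Fin m) (j : Fin n) : dkmn m n :=
  LieSubmodule.Quotient.mk (N := mixIdeal m n)
    (tMix (Fin.castAdd n i) (Fin.natAdd m j) (castAdd_ne_natAdd i j)
      (Or.inr (natAdd_le_left m j)))

/-- The generator `c_{ij}` of `dk_{m,n}` (0-indexed): `c_{ij} = t_{(m+i)(m+j)}`. -/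
def cG {m n : ℕ} (u v : Fin n) (h : u ≠ v) : dkmn m n :=
  LieSubmodule.Quotient.mk (N := mixIdeal m n)
    (tMix (Fin.natAdd m u) (Fin.natAdd m v) (natAdd_ne h)
      (Or.inl (natAdd_le_left m u)))

/-- The Lie ideal `c` of `dk_{m,n}` generated by the `c_{ij}`. -/
def cId (m n : ℕ) : LieIdeal ℚ (dkmn m n) :=
  LieSubmodule.lieSpan ℚ (dkmn m n) {z | ∃ (u v : Fin n) (h : u ≠ v), z = cG u v h}

/-- The Lie ideal `[c,c]`. -/
def ccId (m n : ℕ) : LieIdeal ℚ (dkmn m n) := ⁅cId m n, cId m n⁆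

/-- The emergent Drinfeld–Kohno Lie algebra `edk_{m,n} = dk_{m,n}/[c,c]`. -/
abbrev edk (m n : ℕ) := dkmn m n ⧸ ccId m n

/-- Projection `dk_{m,n} → edk_{m,n}` as a function. -/
def eprojF (m n : ℕ) : dkmn m n → edk m n := LieSubmodule.Quotient.mk (N := ccId m n)

/-- Projection `dk_{m,n} → edk_{m,n}` as a `ℚ`-linear map. -/
def eproj (m n : ℕ) : dkmn m n →ₗ[ℚ] edk m n := (ccId m n).toSubmodule.mkQ

/-- `a_{ij}` in `edk_{m,n}`. -/
def aGE {m n : ℕ} (i : Fin m) (j : Fin n) : edk m n := eprojF m n (aG i j)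

/-- `c_{ij}` in `edk_{m,n}`. -/
def cGE {m n : ℕ} (u v : Fin n) (h : u ≠ v) : edk m n := eprojF m n (cG u v h)

/-- The canonical Lie algebra map `FreeLieAlgebra ℚ (Fin m) → ass_m`,
whose image is `lie_m`. -/
def toAssL (m : ℕ) : FreeLieAlgebra ℚ (Fin m) →ₗ⁅ℚ⁆ FreeAlgebra ℚ (Fin m) :=
  FreeLieAlgebra.lift ℚ (FreeAlgebra.ι ℚ)

/-- `u ↦ u_i` (at `dk` level): the Lie algebra map with `x_p ↦ a_{pi}`. -/
def uEldk {m n : ℕ} (i : Fin n) : FreeLieAlgebra ℚ (Fin m) →ₗ⁅ℚ⁆ dkmn m n :=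
  FreeLieAlgebra.lift ℚ fun p => aG p i

/-- `u ↦ u_i`: the Lie algebra map `lie_m → edk_{m,n}` with `x_p ↦ a_{pi}`. -/
def uEl {m n : ℕ} (i : Fin n) : FreeLieAlgebra ℚ (Fin m) →ₗ⁅ℚ⁆ edk m n :=
  FreeLieAlgebra.lift ℚ fun p => aGE p i

/-- Iterated bracketing `[a_{p₁ j}, [a_{p₂ j}, [… , [a_{p_d j}, ξ]…]]]`. -/
def adWApply {m n : ℕ} (j : Fin n) : List (Fin m) → edk m n → edk m n
  | [], ξ => ξ
  | p :: t, ξ => ⁅aGE p j, adWApply j t ξ⁆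


/-- `w ↦ w_{uv}`: the linear map `ass_m → edk_{m,n}` with
`1 ↦ c_{uv}` and `(x_{p₁}⋯x_{p_d}) ↦ [a_{p₁ v}, [… [a_{p_d v}, c_{uv}]…]]`. -/
def wEl {m n : ℕ} (u v : Fin n) (h : u ≠ v) : Ass m →ₗ[ℚ] edk m n :=
  liftWord fun l => adWApply v l (cGE u v h)

/-- `ad_w^{(l)}(ξ)`, linear in `w`. -/
def adOp {m n : ℕ} (l : Fin n) (ξ : edk m n) : Ass m →ₗ[ℚ] edk m n :=
  liftWord fun lst => adWApply l lst ξ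

/-- Degree-`k` part of the free Lie algebra (generators of degree 1), realized as the
preimage of the degree-`k` part of the free associative algebra under the canonical map. -/
def flHomog (X : Type) (k : ℕ) : Submodule ℚ (FreeLieAlgebra ℚ X) :=
  Submodule.comap
    (FreeLieAlgebra.lift ℚ (FreeAlgebra.ι ℚ (X := X)) :
      FreeLieAlgebra ℚ X →ₗ⁅ℚ⁆ FreeAlgebra ℚ X).toLinearMap
    (homogS X k)

/-- Degree-`k` part of `edk_{m,n}`. -/
def edkHomog (m n : ℕ) (k : ℕ) : Submodule ℚ (edk m n) :=
  (((flHomog (MIdx m n) k).map (mixIdeal m n).toSubmodule.mkQ)).map (eproj m n)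

-- Fin helper lemmas
lemma castSucc_ne_of_ne {n : ℕ} {u v : Fin n} (h : u ≠ v) :
    Fin.castSucc u ≠ Fin.castSucc v := fun hh => h (Fin.castSucc_injective n hh)

lemma succ_ne_of_ne {n : ℕ} {u v : Fin n} (h : u ≠ v) :
    Fin.succ u ≠ Fin.succ v := fun hh => h (Fin.succ_injective n hh)

lemma castSucc_ne_last {n : ℕ} (u : Fin n) : Fin.castSucc u ≠ Fin.last n :=
  (Fin.castSucc_lt_last u).ne

lemma castSucc_ne_succ_of_le {n : ℕ} {u v : Fin n} (h : u ≤ v) :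
    Fin.castSucc u ≠ Fin.succ v := by
  intro hh
  have hv := congrArg Fin.val hh
  simp only [Fin.coe_castSucc, Fin.val_succ] at hv
  have := Fin.le_def.mp h
  omega

/-- `D` is the pole coface map `δ_k : dk_{m,n} → dk_{m+1,n}`, `0 ≤ k ≤ m`
(1-indexed `k`; `k = 0` is extension on the left). -/
def IsDeltaPole (m n : ℕ) (k : ℕ) (D : dkmn m n →ₗ⁅ℚ⁆ dkmn (m + 1) n) : Prop :=
  (∀ (i : Fin m) (j : Fin n),
     (((i : ℕ) + 1 < k) → D (aG i j) = aG (Fin.castSucc i) j) ∧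
     (((i : ℕ) + 1 = k) → D (aG i j) = aG (Fin.castSucc i) j + aG (Fin.succ i) j) ∧
     ((k < (i : ℕ) + 1) → D (aG i j) = aG (Fin.succ i) j)) ∧
  (∀ (u v : Fin n) (h : u ≠ v), D (cG u v h) = cG u v h)

/-- `D` is the strand coface map `δ_{m+κ} : dk_{m,n} → dk_{m,n+1}`, `1 ≤ κ ≤ n+1`
(1-indexed strand `κ`; `κ = n+1` is extension on the right). -/
def IsDeltaStrand (m n : ℕ) (κ : ℕ) (D : dkmn m n →ₗ⁅ℚ⁆ dkmn m (n + 1)) : Prop :=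
  (∀ (i : Fin m) (j : Fin n),
     (((j : ℕ) + 1 < κ) → D (aG i j) = aG i (Fin.castSucc j)) ∧
     (((j : ℕ) + 1 = κ) → D (aG i j) = aG i (Fin.castSucc j) + aG i (Fin.succ j)) ∧
     ((κ < (j : ℕ) + 1) → D (aG i j) = aG i (Fin.succ j))) ∧
  (∀ (u v : Fin n) (h : u < v),
     (((v : ℕ) + 1 < κ) →
        D (cG u v h.ne) = cG (Fin.castSucc u) (Fin.castSucc v) (castSucc_ne_of_ne h.ne)) ∧
     (((v : ℕ) + 1 = κ) →
        D (cG u v h.ne) = cG (Fin.castSucc u) (Fin.castSucc v) (castSucc_ne_of_ne h.ne)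
          + cG (Fin.castSucc u) (Fin.succ v) (castSucc_ne_succ_of_le h.le)) ∧
     (((u : ℕ) + 1 < κ ∧ κ < (v : ℕ) + 1) →
        D (cG u v h.ne) = cG (Fin.castSucc u) (Fin.succ v) (castSucc_ne_succ_of_le h.le)) ∧
     (((u : ℕ) + 1 = κ) →
        D (cG u v h.ne) = cG (Fin.castSucc u) (Fin.succ v) (castSucc_ne_succ_of_le h.le)
          + cG (Fin.succ u) (Fin.succ v) (succ_ne_of_ne h.ne)) ∧
     ((κ < (u : ℕ) + 1) →
        D (cG u v h.ne) = cG (Fin.succ u) (Fin.succ v) (succ_ne_of_ne h.ne)))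

/-- `T` is `ϑ_{m+1} : dk_{m+1,n} → dk_{m,n+1}` (the last pole becomes the first strand). -/
def IsTheta (m n : ℕ) (T : dkmn (m + 1) n →ₗ⁅ℚ⁆ dkmn m (n + 1)) : Prop :=
  (∀ (i : Fin (m + 1)) (j : Fin n),
     (∀ hi : (i : ℕ) < m, T (aG i j) = aG ⟨i, hi⟩ (Fin.succ j)) ∧
     ((i : ℕ) = m → T (aG i j) = cG 0 (Fin.succ j) (Fin.succ_ne_zero j).symm)) ∧
  (∀ (u v : Fin n) (h : u ≠ v), T (cG u v h) = cG (Fin.succ u) (Fin.succ v) (succ_ne_of_ne h))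

/-- The coface map `d_k : dk_{m,n} → dk_{m,n+1}`, built from the data of the pole
cofaces, the strand cofaces, and `ϑ_{m+1}`. -/
def coface (m n : ℕ) (Dp : ℕ → (dkmn m n →ₗ⁅ℚ⁆ dkmn (m + 1) n))
    (Ds : ℕ → (dkmn m n →ₗ⁅ℚ⁆ dkmn m (n + 1)))
    (T : dkmn (m + 1) n →ₗ⁅ℚ⁆ dkmn m (n + 1)) (k : ℕ) :
    dkmn m n →ₗ⁅ℚ⁆ dkmn m (n + 1) :=
  if k ≤ m then T.comp (Dp k) else Ds (k - m)

/-- The algebra map `ass_{m'+1} → ass_{m'}` with `x_p ↦ x_p` (`p < m'`) and `x_{m'} ↦ 0`. -/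
def setLast0A (m' : ℕ) : Ass (m' + 1) →ₐ[ℚ] Ass m' :=
  FreeAlgebra.lift ℚ fun p : Fin (m' + 1) =>
    if h : (p : ℕ) < m' then gen ⟨p, h⟩ else 0

/-- The Lie algebra map `FreeLie (Fin (m'+1)) → FreeLie (Fin m')` setting the last
generator to `0`. -/
def flSetLast0 (m' : ℕ) : FreeLieAlgebra ℚ (Fin (m' + 1)) →ₗ⁅ℚ⁆ FreeLieAlgebra ℚ (Fin m') :=
  FreeLieAlgebra.lift ℚ fun p : Fin (m' + 1) =>
    if h : (p : ℕ) < m' then FreeLieAlgebra.of ℚ ⟨p, h⟩ else 0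



section C1
variable {N : ℕ}

lemma basis_eq (w : FreeMonoid (Fin N)) :
    (FreeAlgebra.basisFreeMonoid ℚ (Fin N)) w = wordProd w.toList := by
  rw [FreeAlgebra.basisFreeMonoid]
  simp only [Module.Basis.map_apply, Finsupp.coe_basisSingleOne, AlgEquiv.toLinearEquiv_apply]
  rw [FreeAlgebra.equivMonoidAlgebraFreeMonoid]
  simp only [LinearEquiv.trans_symm, LinearEquiv.trans_apply, AlgEquiv.toLinearEquiv_symm, AlgEquiv.toLinearEquiv_apply, AlgEquiv.ofAlgHom_symm_apply]
  erw [MonoidAlgebra.lift_single]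
  rw [one_smul]
  rw [show w = FreeMonoid.ofList w.toList from rfl, FreeMonoid.lift_ofList]
  rfl

lemma liftWord_wordProd {A : Type} [AddCommGroup A] [Module ℚ A]
    (f : List (Fin N) → A) (l : List (Fin N)) :
    liftWord f (wordProd l) = f l := by
  have : wordProd l = (FreeAlgebra.basisFreeMonoid ℚ (Fin N)) (FreeMonoid.ofList l) := by
    rw [basis_eq]; rfl
  rw [this, liftWord, Module.Basis.constr_basis]
  rfl

lemma liftWord_ext {A : Type} [AddCommGroup A] [Module ℚ A]
    {F G : Ass N →ₗ[ℚ] A} (h : ∀ l : List (Fin N), F (wordProd l) = G (wordProd l)) :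
    F = G := by
  apply (FreeAlgebra.basisFreeMonoid ℚ (Fin N)).ext
  intro w
  rw [basis_eq]; simpa using h _

lemma forall_word_mem {A : Type} [AddCommGroup A] [Module ℚ A]
    (f : Ass N →ₗ[ℚ] A) (S : Submodule ℚ A)
    (h : ∀ l : List (Fin N), f (wordProd l) ∈ S) : ∀ w, f w ∈ S := by
  intro w
  have hw : w ∈ Submodule.span ℚ (Set.range (FreeAlgebra.basisFreeMonoid ℚ (Fin N))) := by
    rw [Module.Basis.span_eq]; trivial
  refine Submodule.span_induction ?_ ?_ ?_ ?_ hw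
  · rintro x ⟨w', rfl⟩; rw [basis_eq]; exact h _
  · simpa using S.zero_mem
  · intro x y _ _ hx hy; rw [map_add]; exact S.add_mem hx hy
  · intro c x _ hx; rw [map_smul]; exact S.smul_mem c hx

lemma freeLie_induction {X : Type} {P : FreeLieAlgebra ℚ X → Prop}
    (h0 : P 0) (hof : ∀ i, P (FreeLieAlgebra.of ℚ i))
    (hsmul : ∀ (c : ℚ) x, P x → P (c • x))
    (hadd : ∀ x y, P x → P y → P (x + y))
    (hlie : ∀ x y, P x → P y → P ⁅x, y⁆) : ∀ x, P x := by
  let S : LieSubalgebra ℚ (FreeLieAlgebra ℚ X) :=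
    { carrier := {x | P x}
      add_mem' := fun ha hb => hadd _ _ ha hb
      zero_mem' := h0
      smul_mem' := fun c x hx => hsmul c x hx
      lie_mem' := fun ha hb => hlie _ _ ha hb }
  have hofS : ∀ i, FreeLieAlgebra.of ℚ i ∈ S := fun i => hof i
  let g : FreeLieAlgebra ℚ X →ₗ⁅ℚ⁆ S :=
    FreeLieAlgebra.lift ℚ (fun i => ⟨FreeLieAlgebra.of ℚ i, hofS i⟩)
  have key : S.incl.comp g = LieHom.id := by
    apply FreeLieAlgebra.hom_ext
    intro x
    simp [g, FreeLieAlgebra.lift_of_apply, LieSubalgebra.coe_incl]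
  intro x
  have hx : ((g x : S) : FreeLieAlgebra ℚ X) = x := by
    have := congrArg (fun (F : FreeLieAlgebra ℚ X →ₗ⁅ℚ⁆ FreeLieAlgebra ℚ X) => F x) key
    simpa using this
  have hm : ((g x : S) : FreeLieAlgebra ℚ X) ∈ S := (g x).2
  rwa [hx] at hm

-- word product lemmas
lemma wordProd_nil : wordProd ([] : List (Fin N)) = 1 := rfl
lemma wordProd_cons (a : Fin N) (l : List (Fin N)) :
    wordProd (a :: l) = gen a * wordProd l := by simp [wordProd]
lemma wordProd_append (l r : List (Fin N)) :
    wordProd (l ++ r) = wordProd l * wordProd r := by simp [wordProd]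
lemma wordProd_singleton (a : Fin N) : wordProd [a] = gen a := by simp [wordProd]

-- etaWord lemmas
lemma etaWord_nil_left (r : List (Fin N)) : etaWord [] r = 0 := by
  cases r <;> rfl
lemma etaWord_nil_right (l : List (Fin N)) : etaWord l [] = 0 := by
  unfold etaWord
  rcases h : l.getLast? with _ | a <;> simp
lemma etaWord_concat (ys : List (Fin N)) (a b : Fin N) (t : List (Fin N)) :
    etaWord (ys ++ [a]) (b :: t) = if a = b then -(wordProd (ys ++ a :: t)) else 0 := by
  unfold etaWord
  rw [List.getLast?_concat, List.dropLast_concat]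

lemma etaWord_append_right (lw l r : List (Fin N)) (h : l ≠ []) :
    etaWord lw (l ++ r) = etaWord lw l * wordProd r := by
  rcases l with _ | ⟨b, t⟩
  · exact absurd rfl h
  rcases List.eq_nil_or_concat lw with rfl | ⟨ys, a, rfl⟩
  · rw [etaWord_nil_left, etaWord_nil_left, zero_mul]
  · rw [List.concat_eq_append, List.cons_append, etaWord_concat, etaWord_concat]
    split
    · rw [neg_mul, ← wordProd_append]
      simp
    · rw [zero_mul]

lemma etaWord_append_left (la lb r : List (Fin N)) (h : lb ≠ []) :
    etaWord (la ++ lb) r = wordProd la * etaWord lb r := by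
  rcases List.eq_nil_or_concat lb with rfl | ⟨ys, a, rfl⟩
  · exact absurd rfl h
  rcases r with _ | ⟨b, t⟩
  · rw [etaWord_nil_right, etaWord_nil_right, mul_zero]
  · rw [List.concat_eq_append, ← List.append_assoc, etaWord_concat, etaWord_concat]
    split
    · rw [mul_neg, ← wordProd_append]
      simp
    · rw [mul_zero]

lemma muWord_cons (a : Fin N) (l : List (Fin N)) :
    muWord (a :: l) = etaWord [a] l + gen a * muWord l := by
  rcases l with _ | ⟨b, t⟩
  · show (0 : Ass N) = etaWord [a] [] + gen a * 0
    rw [etaWord_nil_right, mul_zero, add_zero]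
  · show (if a = b then -(wordProd (a :: t)) else 0) + gen a * muWord (b :: t) = _
    have h : etaWord [a] (b :: t) = if a = b then -(wordProd (a :: t)) else 0 := by
      rw [show ([a] : List (Fin N)) = [] ++ [a] from rfl, etaWord_concat]
      rfl
    rw [h]

lemma muWord_append (l1 l2 : List (Fin N)) :
    muWord (l1 ++ l2) =
      muWord l1 * wordProd l2 + wordProd l1 * muWord l2 + etaWord l1 l2 := by
  induction l1 with
  | nil => simp [muWord, wordProd_nil, etaWord_nil_left]
  | cons a l1 ih =>
    rw [List.cons_append, muWord_cons, ih, muWord_cons, wordProd_cons]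
    by_cases hl : l1 = []
    · subst hl
      simp [muWord, etaWord_nil_left, etaWord_nil_right, wordProd_nil, wordProd_singleton,
        mul_add]
      abel
    · rw [etaWord_append_right [a] l1 l2 hl,
        show (a :: l1) = [a] ++ l1 from rfl, etaWord_append_left [a] l1 l2 hl,
        wordProd_singleton]
      noncomm_ring

end C1
section C2
variable {m : ℕ}

lemma muGr_wordProd (l : List (Fin m)) : muGr m (wordProd l) = muWord l :=
  liftWord_wordProd _ _

lemma etaGr_wordProd (l r : List (Fin m)) :
    etaGr m (wordProd l) (wordProd r) = etaWord l r := by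
  rw [etaGr, liftWord_wordProd]
  exact liftWord_wordProd _ _

lemma assExt2 {A : Type} [AddCommGroup A] [Module ℚ A]
    {F G : Ass m →ₗ[ℚ] Ass m →ₗ[ℚ] A}
    (h : ∀ l r : List (Fin m), F (wordProd l) (wordProd r) = G (wordProd l) (wordProd r)) :
    F = G :=
  liftWord_ext fun l => liftWord_ext fun r => h l r

lemma muGr_mul (a b : Ass m) :
    muGr m (a * b) = muGr m a * b + a * muGr m b + etaGr m a b := by
  have key : (LinearMap.mul ℚ (Ass m)).compr₂ (muGr m) =
      (LinearMap.mul ℚ (Ass m)).comp (muGr m) + (LinearMap.mul ℚ (Ass m)).compl₂ (muGr m)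
        + etaGr m := by
    apply assExt2
    intro l r
    simp only [LinearMap.compr₂_apply, LinearMap.mul_apply', LinearMap.add_apply,
      LinearMap.comp_apply, LinearMap.compl₂_apply]
    rw [← wordProd_append, muGr_wordProd, muGr_wordProd, muGr_wordProd, etaGr_wordProd,
      muWord_append]
  have := congrArg (fun F : Ass m →ₗ[ℚ] Ass m →ₗ[ℚ] Ass m => F a b) key
  simpa using this

def NEsub (m : ℕ) : Submodule ℚ (Ass m) :=
  Submodule.span ℚ {x | ∃ l : List (Fin m), l ≠ [] ∧ x = wordProd l}

lemma NE_mul : ∀ a ∈ NEsub m, ∀ b ∈ NEsub m, a * b ∈ NEsub m := by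
  intro a ha
  refine Submodule.span_induction ?_ ?_ ?_ ?_ ha
  · rintro x ⟨l, hl, rfl⟩ b hb
    refine Submodule.span_induction ?_ ?_ ?_ ?_ hb
    · rintro y ⟨r, hr, rfl⟩
      rw [← wordProd_append]
      exact Submodule.subset_span ⟨l ++ r, by simp [hl], rfl⟩
    · simp
    · intro x y _ _ hx hy; rw [mul_add]; exact add_mem hx hy
    · intro c x _ hx; rw [mul_smul_comm]; exact Submodule.smul_mem _ c hx
  · intro b _; simp
  · intro x y _ _ hx hy b hb; rw [add_mul]; exact add_mem (hx b hb) (hy b hb)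
  · intro c x _ hx b hb; rw [smul_mul_assoc]; exact Submodule.smul_mem _ c (hx b hb)

lemma toAssL_mem_NE (U : FreeLieAlgebra ℚ (Fin m)) : toAssL m U ∈ NEsub m := by
  refine freeLie_induction (P := fun U => toAssL m U ∈ NEsub m) ?_ ?_ ?_ ?_ ?_ U
  · simp
  · intro i
    have : toAssL m (FreeLieAlgebra.of ℚ i) = wordProd [i] := by
      rw [toAssL, FreeLieAlgebra.lift_of_apply, wordProd_singleton]; rfl
    rw [this]
    exact Submodule.subset_span ⟨[i], by simp, rfl⟩
  · intro c x hx; rw [map_smul]; exact Submodule.smul_mem _ c hx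
  · intro x y hx hy; rw [map_add]; exact add_mem hx hy
  · intro x y hx hy
    rw [LieHom.map_lie, Ring.lie_def]
    exact sub_mem (NE_mul _ hx _ hy) (NE_mul _ hy _ hx)

lemma etaGr_mul_right {a : Ass m} (ha : a ∈ NEsub m) (w b : Ass m) :
    etaGr m w (a * b) = etaGr m w a * b := by
  revert w b
  refine Submodule.span_induction ?_ ?_ ?_ ?_ ha
  · rintro x ⟨l, hl, rfl⟩ w b
    have key : (etaGr m).compl₂ (LinearMap.mulLeft ℚ (wordProd l)) =
        (LinearMap.mul ℚ (Ass m)).comp ((etaGr m).flip (wordProd l)) := by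
      apply assExt2
      intro lw r
      simp only [LinearMap.compl₂_apply, LinearMap.mulLeft_apply, LinearMap.comp_apply,
        LinearMap.flip_apply, LinearMap.mul_apply']
      rw [← wordProd_append, etaGr_wordProd, etaGr_wordProd, etaWord_append_right _ _ _ hl]
    have := congrArg (fun F : Ass m →ₗ[ℚ] Ass m →ₗ[ℚ] Ass m => F w b) key
    simpa using this
  · intro w b; simp
  · intro x y _ _ hx hy w b
    rw [add_mul, map_add, map_add, add_mul]
    rw [hx w b, hy w b]
  · intro c x _ hx w b
    rw [smul_mul_assoc, map_smul, map_smul, smul_mul_assoc, hx w b]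

lemma etaGr_mul_left {b : Ass m} (hb : b ∈ NEsub m) (a w : Ass m) :
    etaGr m (a * b) w = a * etaGr m b w := by
  revert a w
  refine Submodule.span_induction ?_ ?_ ?_ ?_ hb
  · rintro x ⟨l, hl, rfl⟩ a w
    have key : (etaGr m).comp (LinearMap.mulRight ℚ (wordProd l)) =
        (LinearMap.mul ℚ (Ass m)).compl₂ (etaGr m (wordProd l)) := by
      apply assExt2
      intro la r
      simp only [LinearMap.comp_apply, LinearMap.mulRight_apply, LinearMap.compl₂_apply,
        LinearMap.mul_apply']
      rw [← wordProd_append, etaGr_wordProd, etaGr_wordProd, etaWord_append_left _ _ _ hl]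
    have := congrArg (fun F : Ass m →ₗ[ℚ] Ass m →ₗ[ℚ] Ass m => F a w) key
    simpa using this
  · intro a w; simp
  · intro x y _ _ hx hy a w
    rw [mul_add, map_add]
    have := hx a w; have h2 := hy a w
    simp only [LinearMap.map_add, LinearMap.add_apply] at *
    rw [this, h2, mul_add]
  · intro c x _ hx a w
    rw [mul_smul_comm, map_smul]
    have := hx a w
    simp only [LinearMap.map_smul, LinearMap.smul_apply] at *
    rw [this, mul_smul_comm]

end C2
section C3
variable {m n : ℕ}

/-- Quotient map by a Lie ideal, as a Lie algebra homomorphism. -/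
def mkL {L : Type} [LieRing L] [LieAlgebra ℚ L] (I : LieIdeal ℚ L) : L →ₗ⁅ℚ⁆ L ⧸ I :=
  { I.toSubmodule.mkQ with map_lie' := fun {x y} => rfl }

lemma mkL_apply {L : Type} [LieRing L] [LieAlgebra ℚ L] (I : LieIdeal ℚ L) (x : L) :
    mkL I x = LieSubmodule.Quotient.mk (N := I) x := rfl

lemma mkL_eq_zero {L : Type} [LieRing L] [LieAlgebra ℚ L] (I : LieIdeal ℚ L) {x : L}
    (hx : x ∈ I) : mkL I x = 0 := by
  rw [mkL_apply, LieSubmodule.Quotient.mk_eq_zero']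
  exact hx

/-- mk as LieHom for the mixed ideal. -/
abbrev mkM (m n : ℕ) : FLmix m n →ₗ⁅ℚ⁆ dkmn m n := mkL (mixIdeal m n)

lemma mkM_apply (z : FLmix m n) :
    mkM m n z = LieSubmodule.Quotient.mk (N := mixIdeal m n) z := rfl

lemma mk_rel {z : FLmix m n} (hz : z ∈ mixRels m n) : mkM m n z = 0 :=
  mkL_eq_zero _ (LieSubmodule.subset_lieSpan hz)

lemma tQ_symm (p q : Fin (m + n)) (h : p ≠ q) (hm : m ≤ (p : ℕ) ∨ m ≤ (q : ℕ)) :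
    mkM m n (tMix p q h hm) = mkM m n (tMix q p h.symm hm.symm) := by
  have h0 : (mixIdeal m n).toSubmodule.mkQ (tMix p q h hm - tMix q p h.symm hm.symm) = 0 := by
    rw [Submodule.mkQ_apply, Submodule.Quotient.mk_eq_zero]
    exact LieSubmodule.subset_lieSpan (Or.inl (Or.inl ⟨p, q, h, hm, rfl⟩))
  rw [map_sub, sub_eq_zero] at h0
  exact h0

lemma tQ_comm (p q r s : Fin (m + n)) (hpq : p ≠ q) (hmpq : m ≤ (p : ℕ) ∨ m ≤ (q : ℕ))
    (hrs : r ≠ s) (hmrs : m ≤ (r : ℕ) ∨ m ≤ (s : ℕ))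
    (h1 : p ≠ r) (h2 : p ≠ s) (h3 : q ≠ r) (h4 : q ≠ s) :
    ⁅mkM m n (tMix p q hpq hmpq), mkM m n (tMix r s hrs hmrs)⁆ = 0 := by
  rw [← LieHom.map_lie]
  exact mk_rel (Or.inl (Or.inr ⟨p, q, r, s, hpq, hmpq, hrs, hmrs, h1, h2, h3, h4, rfl⟩))

lemma tQ_4T (p q r : Fin (m + n)) (hpq : p ≠ q) (hmpq : m ≤ (p : ℕ) ∨ m ≤ (q : ℕ))
    (hqr : q ≠ r) (hmqr : m ≤ (q : ℕ) ∨ m ≤ (r : ℕ))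
    (hpr : p ≠ r) (hmpr : m ≤ (p : ℕ) ∨ m ≤ (r : ℕ)) :
    ⁅mkM m n (tMix p q hpq hmpq) + mkM m n (tMix q r hqr hmqr),
      mkM m n (tMix p r hpr hmpr)⁆ = 0 := by
  rw [← map_add, ← LieHom.map_lie]
  exact mk_rel (Or.inr ⟨p, q, r, hpq, hmpq, hqr, hmqr, hpr, hmpr, rfl⟩)

lemma castAdd_ne {m n : ℕ} {p q : Fin m} (h : p ≠ q) :
    Fin.castAdd n p ≠ Fin.castAdd n q := by
  intro hh
  exact h (by
    have hv := congrArg Fin.val hh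
    simp only [Fin.coe_castAdd] at hv
    exact Fin.ext hv)

lemma aG_eq_mkM (p : Fin m) (j : Fin n) :
    aG p j = mkM m n (tMix (Fin.castAdd n p) (Fin.natAdd m j) (castAdd_ne_natAdd p j)
      (Or.inr (natAdd_le_left m j))) := rfl

lemma cG_eq_mkM (u v : Fin n) (h : u ≠ v) :
    cG (m := m) u v h = mkM m n (tMix (Fin.natAdd m u) (Fin.natAdd m v) (natAdd_ne h)
      (Or.inl (natAdd_le_left m u))) := rfl

lemma cG_symm (u v : Fin n) (h : u ≠ v) : cG (m := m) u v h = cG v u h.symm := by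
  rw [cG_eq_mkM, cG_eq_mkM, tQ_symm]

lemma aG_aG_comm (p q : Fin m) (hpq : p ≠ q) (j j' : Fin n) (hjj' : j ≠ j') :
    ⁅aG (m := m) (n := n) p j, aG (m := m) q j'⁆ = 0 := by
  rw [aG_eq_mkM, aG_eq_mkM]
  exact tQ_comm _ _ _ _ _ _ _ _ (castAdd_ne hpq) (castAdd_ne_natAdd p j')
    ((castAdd_ne_natAdd q j).symm) (natAdd_ne hjj')

lemma aG_cG_comm (p : Fin m) (j u v : Fin n) (hju : j ≠ u) (hjv : j ≠ v) (huv : u ≠ v) :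
    ⁅aG (m := m) p j, cG (m := m) u v huv⁆ = 0 := by
  rw [aG_eq_mkM, cG_eq_mkM]
  exact tQ_comm _ _ _ _ _ _ _ _ (castAdd_ne_natAdd p u) (castAdd_ne_natAdd p v)
    (natAdd_ne hju) (natAdd_ne hjv)

lemma fourT1 (p : Fin m) (u v : Fin n) (huv : u ≠ v) :
    ⁅aG (m := m) p u + cG u v huv, aG (m := m) p v⁆ = 0 := by
  rw [aG_eq_mkM, aG_eq_mkM, cG_eq_mkM]
  exact tQ_4T _ _ _ _ _ _ _ _ _

lemma fourT2 (p : Fin m) (u v : Fin n) (huv : u ≠ v) :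
    ⁅aG (m := m) p u + aG (m := m) p v, cG (m := m) u v huv⁆ = 0 := by
  have h4 := tQ_4T (Fin.natAdd m u) (Fin.castAdd n p) (Fin.natAdd m v)
    (castAdd_ne_natAdd p u).symm (Or.inl (natAdd_le_left m u))
    (castAdd_ne_natAdd p v) (Or.inr (natAdd_le_left m v))
    (natAdd_ne huv) (Or.inl (natAdd_le_left m u))
  rw [tQ_symm (Fin.natAdd m u) (Fin.castAdd n p)] at h4
  rw [aG_eq_mkM, aG_eq_mkM, cG_eq_mkM]
  exact h4

/-- mk as LieHom for `ccId`. -/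
abbrev mkE (m n : ℕ) : dkmn m n →ₗ⁅ℚ⁆ edk m n := mkL (ccId m n)

lemma eprojF_eq_mkE (z : dkmn m n) : eprojF m n z = mkE m n z := rfl

lemma aGE_eq (p : Fin m) (j : Fin n) : aGE p j = mkE m n (aG p j) := rfl
lemma cGE_eq (u v : Fin n) (h : u ≠ v) : cGE (m := m) u v h = mkE m n (cG u v h) := rfl

lemma aGE_aGE_comm (p q : Fin m) (hpq : p ≠ q) (j j' : Fin n) (hjj' : j ≠ j') :
    ⁅aGE (m := m) (n := n) p j, aGE (m := m) q j'⁆ = 0 := by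
  rw [aGE_eq, aGE_eq, ← LieHom.map_lie, aG_aG_comm p q hpq j j' hjj', map_zero]

lemma aGE_cGE_comm (p : Fin m) (j u v : Fin n) (hju : j ≠ u) (hjv : j ≠ v) (huv : u ≠ v) :
    ⁅aGE (m := m) p j, cGE (m := m) u v huv⁆ = 0 := by
  rw [aGE_eq, cGE_eq, ← LieHom.map_lie, aG_cG_comm p j u v hju hjv huv, map_zero]

lemma fourT1E (p : Fin m) (u v : Fin n) (huv : u ≠ v) :
    ⁅aGE (m := m) p u, aGE (m := m) p v⁆ = ⁅aGE (m := m) p v, cGE (m := m) u v huv⁆ := by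
  have h := fourT1 p u v huv
  have h2 : ⁅aGE (m := m) p u + cGE (m := m) u v huv, aGE (m := m) p v⁆ = 0 := by
    rw [aGE_eq, aGE_eq, cGE_eq, ← map_add, ← LieHom.map_lie, h, map_zero]
  rw [add_lie] at h2
  have h3 : ⁅aGE (m := m) p u, aGE (m := m) p v⁆ = -⁅cGE (m := m) u v huv, aGE (m := m) p v⁆ := by
    linear_combination (norm := abel) h2
  rw [h3, lie_skew]

lemma fourT2E (p : Fin m) (u v : Fin n) (huv : u ≠ v) :
    ⁅aGE (m := m) p u, cGE (m := m) u v huv⁆ = -⁅aGE (m := m) p v, cGE (m := m) u v huv⁆ := by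
  have h := fourT2 p u v huv
  have h2 : ⁅aGE (m := m) p u + aGE (m := m) p v, cGE (m := m) u v huv⁆ = 0 := by
    rw [aGE_eq, aGE_eq, cGE_eq, ← map_add, ← LieHom.map_lie, h, map_zero]
  rw [add_lie] at h2
  linear_combination (norm := abel) h2

/-- The image of the ideal `c` in `edk`. -/
def CCsub (m n : ℕ) : Submodule ℚ (edk m n) := (cId m n).toSubmodule.map (eproj m n)

lemma cGE_mem_CC (u v : Fin n) (h : u ≠ v) : cGE (m := m) u v h ∈ CCsub m n :=
  ⟨cG u v h, LieSubmodule.subset_lieSpan ⟨u, v, h, rfl⟩, rfl⟩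

lemma eproj_eq_eprojF (z : dkmn m n) : eproj m n z = eprojF m n z := rfl

lemma lie_mem_CC (x : dkmn m n) {y : edk m n} (hy : y ∈ CCsub m n) :
    ⁅mkE m n x, y⁆ ∈ CCsub m n := by
  obtain ⟨z, hz, rfl⟩ := hy
  refine ⟨⁅x, z⁆, (cId m n).lie_mem hz, ?_⟩
  rw [eproj_eq_eprojF, eprojF_eq_mkE, LieHom.map_lie]
  rfl

lemma CC_lie_CC {x y : edk m n} (hx : x ∈ CCsub m n) (hy : y ∈ CCsub m n) : ⁅x, y⁆ = 0 := by
  obtain ⟨z, hz, rfl⟩ := hx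
  obtain ⟨w, hw, rfl⟩ := hy
  have : (⁅z, w⁆ : dkmn m n) ∈ ccId m n := LieSubmodule.lie_mem_lie hz hw
  have h2 : eproj m n z = mkE m n z := rfl
  have h3 : eproj m n w = mkE m n w := rfl
  rw [h2, h3, ← LieHom.map_lie, ← eprojF_eq_mkE]
  exact mkL_eq_zero _ this

end C3
section C4
variable {m n : ℕ}

lemma adW_cons (j : Fin n) (p : Fin m) (l : List (Fin m)) (ξ : edk m n) :
    adWApply j (p :: l) ξ = ⁅aGE p j, adWApply j l ξ⁆ := rfl

lemma adW_add (j : Fin n) (l : List (Fin m)) (ξ ξ' : edk m n) :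
    adWApply j l (ξ + ξ') = adWApply j l ξ + adWApply j l ξ' := by
  induction l with
  | nil => rfl
  | cons p l ih => rw [adW_cons, ih, lie_add]; rfl

lemma wEl_wordProd (u v : Fin n) (h : u ≠ v) (l : List (Fin m)) :
    wEl u v h (wordProd l) = adWApply v l (cGE u v h) :=
  liftWord_wordProd _ _

lemma adW_mem_CC (v : Fin n) (l : List (Fin m)) {ξ : edk m n} (hξ : ξ ∈ CCsub m n) :
    adWApply v l ξ ∈ CCsub m n := by
  induction l with
  | nil => exact hξ
  | cons p l ih =>
    rw [adW_cons, aGE_eq]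
    exact lie_mem_CC _ ih

lemma wEl_mem_CC (u v : Fin n) (h : u ≠ v) (w : Ass m) : wEl u v h w ∈ CCsub m n := by
  refine forall_word_mem (wEl u v h) (CCsub m n) ?_ w
  intro l
  rw [wEl_wordProd]
  exact adW_mem_CC v l (cGE_mem_CC u v h)

lemma lie_aGE_v_wEl (u v : Fin n) (h : u ≠ v) (p : Fin m) (w : Ass m) :
    ⁅aGE (m := m) p v, wEl u v h w⁆ = wEl u v h (gen p * w) := by
  have key : ((LieAlgebra.ad ℚ (edk m n)) (aGE p v)).comp (wEl u v h) =
      (wEl u v h).comp (LinearMap.mulLeft ℚ (gen p)) := by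
    apply liftWord_ext
    intro l
    simp only [LinearMap.comp_apply, LieAlgebra.ad_apply, LinearMap.mulLeft_apply]
    rw [wEl_wordProd, ← wordProd_cons, wEl_wordProd, adW_cons]
  have := congrArg (fun F : Ass m →ₗ[ℚ] edk m n => F w) key
  simpa using this

lemma adW_aGE_u (u v : Fin n) (h : u ≠ v) (p : Fin m) (l : List (Fin m)) :
    ⁅aGE (m := m) p u, adWApply v l (cGE u v h)⁆ = -adWApply v (l ++ [p]) (cGE u v h) := by
  induction l with
  | nil =>
    show ⁅aGE (m := m) p u, cGE u v h⁆ = -adWApply v [p] (cGE u v h)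
    rw [show adWApply v [p] (cGE (m := m) u v h) = ⁅aGE p v, cGE u v h⁆ from rfl]
    exact fourT2E p u v h
  | cons q l ih =>
    rw [adW_cons, leibniz_lie, ih, lie_neg, ← adW_cons]
    have hz : ⁅⁅aGE (m := m) p u, aGE (m := m) q v⁆, adWApply v l (cGE u v h)⁆ = 0 := by
      by_cases hpq : p = q
      · subst hpq
        rw [fourT1E p u v h]
        refine CC_lie_CC ?_ (adW_mem_CC v l (cGE_mem_CC u v h))
        rw [aGE_eq]
        exact lie_mem_CC _ (cGE_mem_CC u v h)
      · rw [aGE_aGE_comm p q hpq u v h, zero_lie]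
    rw [hz, zero_add]
    rfl

lemma lie_aGE_u_wEl (u v : Fin n) (h : u ≠ v) (p : Fin m) (w : Ass m) :
    ⁅aGE (m := m) p u, wEl u v h w⁆ = -wEl u v h (w * gen p) := by
  have key : ((LieAlgebra.ad ℚ (edk m n)) (aGE p u)).comp (wEl u v h) =
      -((wEl u v h).comp (LinearMap.mulRight ℚ (gen p))) := by
    apply liftWord_ext
    intro l
    simp only [LinearMap.comp_apply, LieAlgebra.ad_apply, LinearMap.mulRight_apply,
      LinearMap.neg_apply]
    rw [wEl_wordProd, ← wordProd_singleton, ← wordProd_append, wEl_wordProd, adW_aGE_u]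
  have := congrArg (fun F : Ass m →ₗ[ℚ] edk m n => F w) key
  simpa using this

lemma adW_aGE_other (u v : Fin n) (h : u ≠ v) (j : Fin n) (hju : j ≠ u) (hjv : j ≠ v)
    (p : Fin m) (l : List (Fin m)) :
    ⁅aGE (m := m) p j, adWApply v l (cGE u v h)⁆ = 0 := by
  induction l with
  | nil => exact aGE_cGE_comm p j u v hju hjv h
  | cons q l ih =>
    rw [adW_cons, leibniz_lie, ih, lie_zero, add_zero]
    by_cases hpq : p = q
    · subst hpq
      rw [fourT1E p j v hjv]
      refine CC_lie_CC ?_ (adW_mem_CC v l (cGE_mem_CC u v h))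
      rw [aGE_eq]
      exact lie_mem_CC _ (cGE_mem_CC j v hjv)
    · rw [aGE_aGE_comm p q hpq j v hjv, zero_lie]

lemma lie_aGE_other_wEl (u v : Fin n) (h : u ≠ v) (j : Fin n) (hju : j ≠ u) (hjv : j ≠ v)
    (p : Fin m) (w : Ass m) :
    ⁅aGE (m := m) p j, wEl u v h w⁆ = 0 := by
  have key : ((LieAlgebra.ad ℚ (edk m n)) (aGE p j)).comp (wEl u v h) = 0 := by
    apply liftWord_ext
    intro l
    simp only [LinearMap.comp_apply, LieAlgebra.ad_apply, LinearMap.zero_apply]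
    rw [wEl_wordProd, adW_aGE_other u v h j hju hjv]
  have := congrArg (fun F : Ass m →ₗ[ℚ] edk m n => F w) key
  simpa using this

lemma uEl_of (i : Fin n) (p : Fin m) : uEl i (FreeLieAlgebra.of ℚ p) = aGE (m := m) p i := by
  rw [uEl, FreeLieAlgebra.lift_of_apply]

lemma toAssL_of (p : Fin m) : toAssL m (FreeLieAlgebra.of ℚ p) = gen p := by
  rw [toAssL, FreeLieAlgebra.lift_of_apply]; rfl

lemma lie_uElv_wEl (u v : Fin n) (h : u ≠ v) (V : FreeLieAlgebra ℚ (Fin m)) (w : Ass m) :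
    ⁅uEl v V, wEl u v h w⁆ = wEl u v h (toAssL m V * w) := by
  revert w
  refine freeLie_induction
    (P := fun V => ∀ w, ⁅uEl v V, wEl u v h w⁆ = wEl u v h (toAssL m V * w)) ?_ ?_ ?_ ?_ ?_ V
  · intro w; simp
  · intro q w
    rw [uEl_of, toAssL_of]
    exact lie_aGE_v_wEl u v h q w
  · intro c x hx w
    rw [map_smul, map_smul, smul_lie, hx w, smul_mul_assoc, map_smul]
  · intro x y hx hy w
    rw [map_add, map_add, add_lie, hx w, hy w, add_mul, map_add]
  · intro x y hx hy w
    rw [LieHom.map_lie, LieHom.map_lie, lie_lie, hx, hy, hx, hy, Ring.lie_def, sub_mul,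
      map_sub, mul_assoc, mul_assoc]

lemma lie_uElu_wEl (u v : Fin n) (h : u ≠ v) (U : FreeLieAlgebra ℚ (Fin m)) (w : Ass m) :
    ⁅uEl u U, wEl u v h w⁆ = -wEl u v h (w * toAssL m U) := by
  revert w
  refine freeLie_induction
    (P := fun U => ∀ w, ⁅uEl u U, wEl u v h w⁆ = -wEl u v h (w * toAssL m U)) ?_ ?_ ?_ ?_ ?_ U
  · intro w; simp
  · intro q w
    rw [uEl_of, toAssL_of]
    exact lie_aGE_u_wEl u v h q w
  · intro c x hx w
    rw [map_smul, map_smul, smul_lie, hx w, mul_smul_comm, map_smul, smul_neg]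
  · intro x y hx hy w
    rw [map_add, map_add, add_lie, hx w, hy w, mul_add, map_add, neg_add]
  · intro x y hx hy w
    rw [LieHom.map_lie, lie_lie, hx w, hy w, lie_neg, lie_neg, hx, hy, LieHom.map_lie,
      Ring.lie_def, mul_sub, map_sub, mul_assoc, mul_assoc]
    abel

lemma lie_uElu_aGEv (u v : Fin n) (h : u ≠ v) (q : Fin m) (U : FreeLieAlgebra ℚ (Fin m)) :
    ⁅uEl u U, aGE (m := m) q v⁆ = -wEl u v h (etaGr m (gen q) (toAssL m U)) := by
  refine freeLie_induction
    (P := fun U => ⁅uEl u U, aGE (m := m) q v⁆ =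
      -wEl u v h (etaGr m (gen q) (toAssL m U))) ?_ ?_ ?_ ?_ ?_ U
  · simp
  · intro p
    rw [uEl_of, toAssL_of]
    have heta : etaGr m (gen q) (gen p) = if q = p then -(gen q) else 0 := by
      rw [← wordProd_singleton, ← wordProd_singleton, etaGr_wordProd,
        show ([q] : List (Fin m)) = [] ++ [q] from rfl, etaWord_concat]
    rw [heta]
    by_cases hqp : q = p
    · subst hqp
      rw [if_pos rfl, fourT1E q u v h, map_neg, neg_neg, ← wordProd_singleton, wEl_wordProd]
      rfl
    · rw [if_neg hqp, aGE_aGE_comm p q (fun hh => hqp hh.symm) u v h, map_zero, neg_zero]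
  · intro c x hx
    rw [map_smul, map_smul, smul_lie, hx, map_smul, map_smul, smul_neg]
  · intro x y hx hy
    rw [map_add, map_add, add_lie, hx, hy, map_add, map_add, neg_add]
  · intro x y hx hy
    rw [LieHom.map_lie, lie_lie, hx, hy, lie_neg, lie_neg,
      lie_uElu_wEl u v h x, lie_uElu_wEl u v h y, LieHom.map_lie, Ring.lie_def, map_sub,
      etaGr_mul_right (toAssL_mem_NE x) (gen q) (toAssL m y),
      etaGr_mul_right (toAssL_mem_NE y) (gen q) (toAssL m x), map_sub]
    abel

end C4
section C5
variable {m n : ℕ}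

lemma lie_uElu_uElv (u v : Fin n) (h : u ≠ v) (U V : FreeLieAlgebra ℚ (Fin m)) :
    ⁅uEl u U, uEl v V⁆ = -wEl u v h (etaGr m (toAssL m V) (toAssL m U)) := by
  refine freeLie_induction (P := fun V => ⁅uEl u U, uEl v V⁆ =
    -wEl u v h (etaGr m (toAssL m V) (toAssL m U))) ?_ ?_ ?_ ?_ ?_ V
  · simp
  · intro q
    rw [uEl_of, toAssL_of]
    exact lie_uElu_aGEv u v h q U
  · intro c x hx
    rw [map_smul, map_smul, lie_smul, hx, map_smul, LinearMap.smul_apply,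
      map_smul, smul_neg]
  · intro x y hx hy
    rw [map_add, map_add, lie_add, hx, hy, map_add, LinearMap.add_apply,
      map_add, neg_add]
  · intro x y hx hy
    rw [LieHom.map_lie, leibniz_lie, hx, hy, neg_lie, lie_skew, lie_uElv_wEl u v h y,
      lie_neg, lie_uElv_wEl u v h x, LieHom.map_lie, Ring.lie_def, map_sub,
      LinearMap.sub_apply, etaGr_mul_left (toAssL_mem_NE y) (toAssL m x) (toAssL m U),
      etaGr_mul_left (toAssL_mem_NE x) (toAssL m y) (toAssL m U), map_sub]
    abel

end C5

section C6
variable {m n : ℕ}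

lemma cG_mem_cId (u v : Fin n) (h : u ≠ v) : cG (m := m) u v h ∈ cId m n :=
  LieSubmodule.subset_lieSpan ⟨u, v, h, rfl⟩

lemma D_cG_mem {k : Fin n} {D : dkmn m n →ₗ⁅ℚ⁆ dkmn m (n + 1)}
    (hD : IsDeltaStrand m n ((k : ℕ) + 1) D) :
    ∀ (u v : Fin n) (h : u ≠ v), D (cG u v h) ∈ cId m (n + 1) := by
  have main : ∀ (u v : Fin n) (h : u < v), D (cG u v h.ne) ∈ cId m (n + 1) := by
    intro u v h
    have hval : (u : ℕ) < (v : ℕ) := h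
    rcases lt_trichotomy (v : ℕ) (k : ℕ) with hv | hv | hv
    · rw [(hD.2 u v h).1 (by omega)]
      exact cG_mem_cId _ _ _
    · rw [(hD.2 u v h).2.1 (by omega)]
      exact add_mem (cG_mem_cId _ _ _) (cG_mem_cId _ _ _)
    · rcases lt_trichotomy (u : ℕ) (k : ℕ) with hu | hu | hu
      · rw [(hD.2 u v h).2.2.1 ⟨by omega, by omega⟩]
        exact cG_mem_cId _ _ _
      · rw [(hD.2 u v h).2.2.2.1 (by omega)]
        exact add_mem (cG_mem_cId _ _ _) (cG_mem_cId _ _ _)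
      · rw [(hD.2 u v h).2.2.2.2 (by omega)]
        exact cG_mem_cId _ _ _
  intro u v h
  rcases lt_or_gt_of_ne h with hlt | hgt
  · have := main u v hlt
    have he : cG (m := m) u v h = cG u v hlt.ne := rfl
    rwa [he]
  · have := main v u hgt
    rwa [cG_symm u v h]
  
lemma D_cc_mem {k : Fin n} {D : dkmn m n →ₗ⁅ℚ⁆ dkmn m (n + 1)}
    (hD : IsDeltaStrand m n ((k : ℕ) + 1) D) :
    ∀ z ∈ ccId m n, D z ∈ ccId m (n + 1) := by
  have h1 : cId m n ≤ LieIdeal.comap D (cId m (n + 1)) := by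
    rw [cId, LieSubmodule.lieSpan_le]
    rintro x ⟨u, v, h, rfl⟩
    rw [SetLike.mem_coe, LieIdeal.mem_comap]
    exact D_cG_mem hD u v h
  have h2 : ccId m n ≤ LieIdeal.comap D (ccId m (n + 1)) := by
    rw [ccId, LieSubmodule.lieIdeal_oper_eq_span, LieSubmodule.lieSpan_le]
    rintro z ⟨⟨x, hx⟩, ⟨y, hy⟩, rfl⟩
    rw [SetLike.mem_coe, LieIdeal.mem_comap, LieHom.map_lie]
    exact LieSubmodule.lie_mem_lie (h1 hx) (h1 hy)
  intro z hz
  exact LieIdeal.mem_comap.mp (h2 hz)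

/-- The induced map on `edk`. -/
def mkDe (D : dkmn m n →ₗ⁅ℚ⁆ dkmn m (n + 1))
    (hcc : ∀ z ∈ ccId m n, D z ∈ ccId m (n + 1)) : edk m n →ₗ⁅ℚ⁆ edk m (n + 1) :=
  { toLinearMap := (ccId m n).toSubmodule.liftQ
      ((mkE m (n + 1)).toLinearMap.comp D.toLinearMap)
      (fun z hz => by
        rw [LinearMap.mem_ker, LinearMap.comp_apply]
        exact mkL_eq_zero _ (hcc z hz))
    map_lie' := by
      intro x y
      obtain ⟨z, rfl⟩ := Submodule.Quotient.mk_surjective _ x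
      obtain ⟨w, rfl⟩ := Submodule.Quotient.mk_surjective _ y
      show mkE m (n + 1) (D ⁅z, w⁆) = ⁅mkE m (n + 1) (D z), mkE m (n + 1) (D w)⁆
      rw [LieHom.map_lie, LieHom.map_lie] }

lemma mkDe_apply (D : dkmn m n →ₗ⁅ℚ⁆ dkmn m (n + 1))
    (hcc : ∀ z ∈ ccId m n, D z ∈ ccId m (n + 1)) (z : dkmn m n) :
    mkDe D hcc (eprojF m n z) = eprojF m (n + 1) (D z) := rfl

end C6
section C7
variable {m n : ℕ}

lemma F_adW (F : edk m n →ₗ⁅ℚ⁆ edk m (n + 1)) (v : Fin n) (v' : Fin (n + 1))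
    (hA : ∀ p : Fin m, F (aGE p v) = aGE p v') (ξ : edk m n) (ξ' : edk m (n + 1))
    (hC : F ξ = ξ') : ∀ l : List (Fin m), F (adWApply v l ξ) = adWApply v' l ξ' := by
  intro l
  induction l with
  | nil => exact hC
  | cons p l ih => rw [adW_cons, LieHom.map_lie, hA, ih, ← adW_cons]

lemma F_wEl (F : edk m n →ₗ⁅ℚ⁆ edk m (n + 1)) {u v : Fin n} {u' v' : Fin (n + 1)}
    (h : u ≠ v) (h' : u' ≠ v')
    (hA : ∀ p : Fin m, F (aGE p v) = aGE p v')
    (hC : F (cGE u v h) = cGE u' v' h') :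
    ∀ w : Ass m, F (wEl u v h w) = wEl u' v' h' w := by
  have key : F.toLinearMap.comp (wEl u v h) = wEl u' v' h' := by
    apply liftWord_ext
    intro l
    simp only [LinearMap.comp_apply, LieHom.coe_toLinearMap]
    rw [wEl_wordProd, wEl_wordProd, F_adW F v v' hA _ _ hC]
  intro w
  have := congrArg (fun G : Ass m →ₗ[ℚ] edk m (n + 1) => G w) key
  simpa using this

lemma F_wEl_splitC (F : edk m n →ₗ⁅ℚ⁆ edk m (n + 1)) {u v : Fin n}
    {u1 u2 v' : Fin (n + 1)} (h : u ≠ v) (h1 : u1 ≠ v') (h2 : u2 ≠ v')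
    (hA : ∀ p : Fin m, F (aGE p v) = aGE p v')
    (hC : F (cGE u v h) = cGE u1 v' h1 + cGE u2 v' h2) :
    ∀ w : Ass m, F (wEl u v h w) = wEl u1 v' h1 w + wEl u2 v' h2 w := by
  have key : F.toLinearMap.comp (wEl u v h) = wEl u1 v' h1 + wEl u2 v' h2 := by
    apply liftWord_ext
    intro l
    simp only [LinearMap.comp_apply, LieHom.coe_toLinearMap, LinearMap.add_apply]
    rw [wEl_wordProd, wEl_wordProd, wEl_wordProd, F_adW F v v' hA _ _ hC, adW_add]
  intro w
  have := congrArg (fun G : Ass m →ₗ[ℚ] edk m (n + 1) => G w) key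
  simpa using this

lemma F_adW_splitA (F : edk m n →ₗ⁅ℚ⁆ edk m (n + 1)) {v : Fin n}
    {s t w' : Fin (n + 1)} (hst : s ≠ t) (hws : w' ≠ s) (hwt : w' ≠ t)
    (hA : ∀ p : Fin m, F (aGE p v) = aGE p s + aGE p t) (ξ : edk m n)
    (hC : F ξ = cGE w' s hws + cGE w' t hwt) :
    ∀ l : List (Fin m),
      F (adWApply v l ξ) = adWApply s l (cGE w' s hws) + adWApply t l (cGE w' t hwt) := by
  intro l
  induction l with
  | nil => exact hC
  | cons p l ih =>
    rw [adW_cons, LieHom.map_lie, hA, ih, add_lie, lie_add, lie_add,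
      adW_aGE_other w' t hwt s hws.symm hst p l,
      adW_aGE_other w' s hws t hwt.symm hst.symm p l, add_zero, zero_add,
      ← adW_cons, ← adW_cons]

lemma F_wEl_splitA (F : edk m n →ₗ⁅ℚ⁆ edk m (n + 1)) {u v : Fin n}
    {s t w' : Fin (n + 1)} (h : u ≠ v) (hst : s ≠ t) (hws : w' ≠ s) (hwt : w' ≠ t)
    (hA : ∀ p : Fin m, F (aGE p v) = aGE p s + aGE p t)
    (hC : F (cGE u v h) = cGE w' s hws + cGE w' t hwt) :
    ∀ w : Ass m, F (wEl u v h w) = wEl w' s hws w + wEl w' t hwt w := by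
  have key : F.toLinearMap.comp (wEl u v h) = wEl w' s hws + wEl w' t hwt := by
    apply liftWord_ext
    intro l
    simp only [LinearMap.comp_apply, LieHom.coe_toLinearMap, LinearMap.add_apply]
    rw [wEl_wordProd, wEl_wordProd, wEl_wordProd, F_adW_splitA F hst hws hwt hA _ hC]
  intro w
  have := congrArg (fun G : Ass m →ₗ[ℚ] edk m (n + 1) => G w) key
  simpa using this

lemma F_uEl_k (F : edk m n →ₗ⁅ℚ⁆ edk m (n + 1)) (k : Fin n) (s t : Fin (n + 1))
    (hst : s ≠ t) (hA : ∀ p : Fin m, F (aGE p k) = aGE p s + aGE p t) :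
    ∀ U : FreeLieAlgebra ℚ (Fin m),
      F (uEl k U) = uEl s U + uEl t U + wEl s t hst (muGr m (toAssL m U)) := by
  refine freeLie_induction (P := fun U => F (uEl k U) =
    uEl s U + uEl t U + wEl s t hst (muGr m (toAssL m U))) ?_ ?_ ?_ ?_ ?_
  · simp
  · intro p
    rw [uEl_of, hA p, uEl_of, uEl_of, toAssL_of, ← wordProd_singleton, muGr_wordProd]
    rw [show muWord [p] = (0 : Ass m) from rfl, map_zero, add_zero]
  · intro c x hx
    rw [map_smul, map_smul, hx, map_smul, map_smul,
      map_smul, map_smul, map_smul, smul_add, smul_add]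
  · intro x y hx hy
    rw [map_add, map_add, hx, hy, map_add, map_add,
      map_add, map_add, map_add]
    abel
  · intro x y hx hy
    rw [LieHom.map_lie, LieHom.map_lie, hx, hy]
    have e1 : ⁅uEl (m := m) s x, uEl s y⁆ = uEl s ⁅x, y⁆ := (LieHom.map_lie _ _ _).symm
    have e5 : ⁅uEl (m := m) t x, uEl t y⁆ = uEl t ⁅x, y⁆ := (LieHom.map_lie _ _ _).symm
    have e2 := lie_uElu_uElv s t hst x y
    have e4 : ⁅uEl (m := m) t x, uEl s y⁆ =
        wEl s t hst (etaGr m (toAssL m x) (toAssL m y)) := by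
      rw [← lie_skew, lie_uElu_uElv s t hst y x, neg_neg]
    have e3 := lie_uElu_wEl s t hst x (muGr m (toAssL m y))
    have e6 := lie_uElv_wEl s t hst x (muGr m (toAssL m y))
    have e7 : ⁅wEl s t hst (muGr m (toAssL m x)), uEl s y⁆ =
        wEl s t hst (muGr m (toAssL m x) * toAssL m y) := by
      rw [← lie_skew, lie_uElu_wEl s t hst y, neg_neg]
    have e8 : ⁅wEl s t hst (muGr m (toAssL m x)), uEl t y⁆ =
        -wEl s t hst (toAssL m y * muGr m (toAssL m x)) := by
      rw [← lie_skew, lie_uElv_wEl s t hst y]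
    have e9 : ⁅wEl s t hst (muGr m (toAssL m x)), wEl s t hst (muGr m (toAssL m y))⁆ = 0 :=
      CC_lie_CC (wEl_mem_CC _ _ _ _) (wEl_mem_CC _ _ _ _)
    simp only [add_lie, lie_add]
    rw [e1, e2, e3, e4, e5, e6, e7, e8, e9]
    rw [LieHom.map_lie (toAssL m) x y, Ring.lie_def, map_sub, muGr_mul, muGr_mul]
    simp only [map_add, map_sub, map_neg]
    abel

end C7


/-- `δ_{m+k}` preserves `[c,c]` and the induced map on `edk` is
given by the stated formulas (with `R = μ_gr|_{lie_m}`). -/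
theorem statement10 (m n : ℕ) (k : Fin n)
    (D : dkmn m n →ₗ⁅ℚ⁆ dkmn m (n + 1))
    (hD : IsDeltaStrand m n ((k : ℕ) + 1) D) :
    (∀ z ∈ ccId m n, D z ∈ ccId m (n + 1)) ∧
    ∃ De : edk m n →ₗ⁅ℚ⁆ edk m (n + 1),
      (∀ z, De (eprojF m n z) = eprojF m (n + 1) (D z)) ∧
      (∀ (U : FreeLieAlgebra ℚ (Fin m)) (i : Fin n),
        (i < k → De (uEl i U) = uEl (Fin.castSucc i) U) ∧
        (i = k → De (uEl i U) = uEl (Fin.castSucc k) U + uEl (Fin.succ k) U +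
          wEl (Fin.castSucc k) (Fin.succ k) (castSucc_ne_succ_of_le le_rfl)
            (muGr m (toAssL m U))) ∧
        (k < i → De (uEl i U) = uEl (Fin.succ i) U)) ∧
      (∀ (w : Ass m) (u v : Fin n) (h : u < v),
        (v < k → De (wEl u v h.ne w) =
          wEl (Fin.castSucc u) (Fin.castSucc v) (castSucc_ne_of_ne h.ne) w) ∧
        (v = k → De (wEl u v h.ne w) =
          wEl (Fin.castSucc u) (Fin.castSucc v) (castSucc_ne_of_ne h.ne) w +
            wEl (Fin.castSucc u) (Fin.succ v) (castSucc_ne_succ_of_le h.le) w) ∧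
        (u < k → k < v → De (wEl u v h.ne w) =
          wEl (Fin.castSucc u) (Fin.succ v) (castSucc_ne_succ_of_le h.le) w) ∧
        (u = k → De (wEl u v h.ne w) =
          wEl (Fin.castSucc u) (Fin.succ v) (castSucc_ne_succ_of_le h.le) w +
            wEl (Fin.succ u) (Fin.succ v) (succ_ne_of_ne h.ne) w) ∧
        (k < u → De (wEl u v h.ne w) =
          wEl (Fin.succ u) (Fin.succ v) (succ_ne_of_ne h.ne) w)) := by
  have hcc := D_cc_mem hD
  have hAlt : ∀ (p : Fin m) (j : Fin n), (j : ℕ) < (k : ℕ) →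
      mkDe D hcc (aGE p j) = aGE p (Fin.castSucc j) := by
    intro p j hj
    have h1 : aGE (m := m) p j = eprojF m n (aG p j) := rfl
    rw [h1, mkDe_apply, (hD.1 p j).1 (by omega)]
    rfl
  have hAeq : ∀ p : Fin m,
      mkDe D hcc (aGE p k) = aGE p (Fin.castSucc k) + aGE p (Fin.succ k) := by
    intro p
    have h1 : aGE (m := m) p k = eprojF m n (aG p k) := rfl
    rw [h1, mkDe_apply, (hD.1 p k).2.1 rfl, eprojF_eq_mkE, map_add]
    rfl
  have hAgt : ∀ (p : Fin m) (j : Fin n), (k : ℕ) < (j : ℕ) →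
      mkDe D hcc (aGE p j) = aGE p (Fin.succ j) := by
    intro p j hj
    have h1 : aGE (m := m) p j = eprojF m n (aG p j) := rfl
    rw [h1, mkDe_apply, (hD.1 p j).2.2 (by omega)]
    rfl
  refine ⟨hcc, mkDe D hcc, fun z => mkDe_apply D hcc z, ?_, ?_⟩
  · intro U i
    refine ⟨?_, ?_, ?_⟩
    · intro hik
      have key : (mkDe D hcc).comp (uEl i) = uEl (Fin.castSucc i) := by
        apply FreeLieAlgebra.hom_ext
        intro p
        rw [LieHom.comp_apply, uEl_of, uEl_of]
        exact hAlt p i (Fin.lt_def.mp hik)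
      have := congrArg (fun G : FreeLieAlgebra ℚ (Fin m) →ₗ⁅ℚ⁆ edk m (n + 1) => G U) key
      simpa using this
    · intro hik
      subst hik
      exact F_uEl_k (mkDe D hcc) i (Fin.castSucc i) (Fin.succ i)
        (castSucc_ne_succ_of_le le_rfl) hAeq U
    · intro hik
      have key : (mkDe D hcc).comp (uEl i) = uEl (Fin.succ i) := by
        apply FreeLieAlgebra.hom_ext
        intro p
        rw [LieHom.comp_apply, uEl_of, uEl_of]
        exact hAgt p i (Fin.lt_def.mp hik)
      have := congrArg (fun G : FreeLieAlgebra ℚ (Fin m) →ₗ⁅ℚ⁆ edk m (n + 1) => G U) key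
      simpa using this
  · intro w u v h
    have hval : (u : ℕ) < (v : ℕ) := Fin.lt_def.mp h
    refine ⟨?_, ?_, ?_, ?_, ?_⟩
    · intro hvk
      have hv : (v : ℕ) < (k : ℕ) := Fin.lt_def.mp hvk
      refine F_wEl (mkDe D hcc) h.ne (castSucc_ne_of_ne h.ne)
        (fun p => hAlt p v hv) ?_ w
      have h1 : cGE (m := m) u v h.ne = eprojF m n (cG u v h.ne) := rfl
      rw [h1, mkDe_apply, (hD.2 u v h).1 (by omega)]
      rfl
    · intro hvk
      subst hvk
      refine F_wEl_splitA (mkDe D hcc) h.ne (castSucc_ne_succ_of_le le_rfl)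
        (castSucc_ne_of_ne h.ne) (castSucc_ne_succ_of_le h.le) hAeq ?_ w
      have h1 : cGE (m := m) u v h.ne = eprojF m n (cG u v h.ne) := rfl
      rw [h1, mkDe_apply, (hD.2 u v h).2.1 rfl, eprojF_eq_mkE, map_add]
      rfl
    · intro huk hkv
      have hu : (u : ℕ) < (k : ℕ) := Fin.lt_def.mp huk
      have hv : (k : ℕ) < (v : ℕ) := Fin.lt_def.mp hkv
      refine F_wEl (mkDe D hcc) h.ne (castSucc_ne_succ_of_le h.le)
        (fun p => hAgt p v hv) ?_ w
      have h1 : cGE (m := m) u v h.ne = eprojF m n (cG u v h.ne) := rfl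
      rw [h1, mkDe_apply, (hD.2 u v h).2.2.1 ⟨by omega, by omega⟩]
      rfl
    · intro huk
      subst huk
      have hv : (u : ℕ) < (v : ℕ) := hval
      refine F_wEl_splitC (mkDe D hcc) h.ne (castSucc_ne_succ_of_le h.le)
        (succ_ne_of_ne h.ne) (fun p => hAgt p v hv) ?_ w
      have h1 : cGE (m := m) u v h.ne = eprojF m n (cG u v h.ne) := rfl
      rw [h1, mkDe_apply, (hD.2 u v h).2.2.2.1 rfl, eprojF_eq_mkE, map_add]
      rfl
    · intro hku
      have hu : (k : ℕ) < (u : ℕ) := Fin.lt_def.mp hku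
      refine F_wEl (mkDe D hcc) h.ne (succ_ne_of_ne h.ne)
        (fun p => hAgt p v (by omega)) ?_ w
      have h1 : cGE (m := m) u v h.ne = eprojF m n (cG u v h.ne) := rfl
      rw [h1, mkDe_apply, (hD.2 u v h).2.2.2.2 (by omega)]
      rfl

end
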